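/- The union of a Dirichlet set and a finite set of reals is a pseudo-Dirichlet set. -/

import Mathlib

open MeasureTheory Filter Set

/-- Distance from a real number to the nearest integer. -/
noncomputable def nintDist (x : ℝ) : ℝ := |x - round x|

/-- `E` is a Dirichlet set. -/
def IsDirichlet (E : Set ℝ) : Prop :=
  ∃ n : ℕ → ℕ, StrictMono n ∧ ∀ x ∈ E, ∀ k : ℕ, nintDist (n k * x) ≤ (1/2) ^ k

/-- `E` is a pseudo-Dirichlet set. -/
def IsPseudoDirichlet (E : Set ℝ) : Prop :=
  ∃ n : ℕ → ℕ, StrictMono n ∧ ∀ x ∈ E, ∀ᶠ k in atTop, nintDist (n k * x) ≤ (1/2) ^ k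

/-- `E` is an Arbault set. -/
def IsArbault (E : Set ℝ) : Prop :=
  ∃ n : ℕ → ℕ, StrictMono n ∧ ∀ x ∈ E,
    Tendsto (fun k => nintDist (n k * x)) atTop (nhds 0)

/-- `E` is an N-set. -/
def IsNSet (E : Set ℝ) : Prop :=
  ∃ a : ℕ → ℝ, (∀ n, 0 ≤ a n) ∧ ¬ Summable a ∧
    ∀ x ∈ E, Summable (fun n => a n * nintDist (n * x))

/-- `s` is an Fσ set: a countable union of closed sets. -/
def IsFsigma (s : Set ℝ) : Prop :=
  ∃ f : ℕ → Set ℝ, (∀ n, IsClosed (f n)) ∧ s = ⋃ n, f n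

lemma nintDist_le_int (x : ℝ) (m : ℤ) : nintDist x ≤ |x - m| := round_le x m

lemma nintDist_sub_le (u v : ℝ) : nintDist u + nintDist v ≥ nintDist (u - v) := by
  refine le_trans (nintDist_le_int (u - v) (round u - round v)) ?_
  unfold nintDist
  push_cast
  have : u - v - ((round u : ℝ) - round v) = (u - round u) - (v - round v) := by ring
  rw [this]
  exact abs_sub _ _

lemma nintDist_le_fract (u v : ℝ) : nintDist (u - v) ≤ |Int.fract u - Int.fract v| := by
  refine le_trans (nintDist_le_int (u - v) (⌊u⌋ - ⌊v⌋)) (le_of_eq ?_)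
  congr 1
  rw [Int.fract, Int.fract]
  push_cast
  ring

lemma main_step (E : Set ℝ) (n : ℕ → ℕ) (hmono : StrictMono n)
    (hn : ∀ x ∈ E, ∀ k : ℕ, nintDist (n k * x) ≤ (1/2) ^ k)
    (t : Finset ℝ) (k B : ℕ) :
    ∃ N : ℕ, B < N ∧ (∀ x ∈ E, nintDist (N * x) ≤ (1/2)^k) ∧
      (∀ x ∈ t, nintDist (N * x) ≤ (1/2)^k) := by
  classical
  set Nb : ℕ := 2 ^ k with hNb
  have hNb0 : 0 < Nb := Nat.pow_pos (by norm_num)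
  set M : ℕ := B + 1 with hM
  set d : ℕ := t.card with hd
  set s : Finset ℕ := Finset.Icc (k+1) (k+1 + M * Nb ^ d) with hs
  -- box map
  have hbox : ∀ (j : ℕ) (x : ℝ), (⌊(Nb : ℝ) * Int.fract ((n j : ℝ) * x)⌋).toNat < Nb := by
    intro j x
    have h1 : (Nb : ℝ) * Int.fract ((n j : ℝ) * x) < Nb := by
      have := Int.fract_lt_one ((n j : ℝ) * x)
      nlinarith [Int.fract_nonneg ((n j : ℝ) * x), (Nat.cast_pos.mpr hNb0 : (0:ℝ) < Nb)]
    have h2 : ⌊(Nb : ℝ) * Int.fract ((n j : ℝ) * x)⌋ < (Nb : ℤ) := by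
      rw [Int.floor_lt]; exact_mod_cast h1
    omega
  let φ : ℕ → (t → Fin Nb) := fun j x => ⟨(⌊(Nb : ℝ) * Int.fract ((n j : ℝ) * x.1)⌋).toNat, hbox j x.1⟩
  have hcard_target : Fintype.card (t → Fin Nb) = Nb ^ d := by
    simp [Fintype.card_fun, hd]
  have hscard : s.card = M * Nb ^ d + 1 := by
    rw [hs, Nat.card_Icc]; omega
  obtain ⟨y, -, hy⟩ := Finset.exists_lt_card_fiber_of_mul_lt_card_of_maps_to
    (f := φ) (s := s) (t := (Finset.univ : Finset (t → Fin Nb)))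
    (n := M) (fun a _ => Finset.mem_univ _) (by rw [hscard, Finset.card_univ, hcard_target]; nlinarith)
  set f : Finset ℕ := s.filter (fun j => φ j = y) with hf
  have hfne : f.Nonempty := Finset.card_pos.mp (by omega)
  have hfcard : 1 < f.card := by omega
  set j1 : ℕ := f.min' hfne with hj1
  set j2 : ℕ := f.max' hfne with hj2
  have hj12 : j1 < j2 := Finset.min'_lt_max'_of_card f hfcard
  have hj1f : j1 ∈ f := Finset.min'_mem f hfne
  have hj2f : j2 ∈ f := Finset.max'_mem f hfne
  have hsub : f ⊆ Finset.Icc j1 j2 := fun a ha =>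
    Finset.mem_Icc.mpr ⟨Finset.min'_le f a ha, Finset.le_max' f a ha⟩
  have hcard_le : f.card ≤ j2 - j1 + 1 := by
    have := Finset.card_le_card hsub
    rw [Nat.card_Icc] at this
    omega
  have hMle : M ≤ j2 - j1 := by omega
  -- j1 ≥ k+1
  have hj1s : j1 ∈ s := (Finset.mem_filter.mp hj1f).1
  have hj2s : j2 ∈ s := (Finset.mem_filter.mp hj2f).1
  have hj1k : k + 1 ≤ j1 := (Finset.mem_Icc.mp hj1s).1
  have hj2k : k + 1 ≤ j2 := (Finset.mem_Icc.mp hj2s).1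
  -- n grows at least linearly
  have key : ∀ c : ℕ, n j1 + c ≤ n (j1 + c) := by
    intro c
    induction c with
    | zero => simp
    | succ c ih =>
      have h2 : n (j1 + c) < n (j1 + (c + 1)) := hmono (by omega)
      omega
  have hngrow : n j1 + M ≤ n j2 := by
    have h := key (j2 - j1)
    rw [Nat.add_sub_cancel' hj12.le] at h
    omega
  have hnle : n j1 ≤ n j2 := by omega
  refine ⟨n j2 - n j1, by omega, ?_, ?_⟩
  · intro x hx
    have hcast : ((n j2 - n j1 : ℕ) : ℝ) * x = (n j2 : ℝ) * x - (n j1 : ℝ) * x := by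
      rw [Nat.cast_sub hnle]; ring
    rw [hcast]
    have h1 := hn x hx j1
    have h2 := hn x hx j2
    have hpow : ∀ j : ℕ, k + 1 ≤ j → ((1:ℝ)/2) ^ j ≤ (1/2) ^ (k+1) := fun j hj =>
      pow_le_pow_of_le_one (by norm_num) (by norm_num) hj
    have := nintDist_sub_le ((n j2 : ℝ) * x) ((n j1 : ℝ) * x)
    have e : ((1:ℝ)/2) ^ (k+1) + (1/2) ^ (k+1) = (1/2)^k := by ring
    have := hpow j1 hj1k; have := hpow j2 hj2k
    linarith [hpow j1 hj1k, hpow j2 hj2k,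
      nintDist_sub_le ((n j2 : ℝ) * x) ((n j1 : ℝ) * x)]
  · intro x hx
    have hφ : φ j1 = φ j2 := by
      rw [(Finset.mem_filter.mp hj1f).2, (Finset.mem_filter.mp hj2f).2]
    have hφx : (⌊(Nb : ℝ) * Int.fract ((n j1 : ℝ) * x)⌋).toNat
        = (⌊(Nb : ℝ) * Int.fract ((n j2 : ℝ) * x)⌋).toNat := by
      have := congrFun hφ ⟨x, hx⟩
      exact congrArg Fin.val this
    have hfl : ⌊(Nb : ℝ) * Int.fract ((n j1 : ℝ) * x)⌋
        = ⌊(Nb : ℝ) * Int.fract ((n j2 : ℝ) * x)⌋ := by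
      have h1 : (0:ℤ) ≤ ⌊(Nb : ℝ) * Int.fract ((n j1 : ℝ) * x)⌋ :=
        Int.floor_nonneg.mpr (mul_nonneg (by positivity) (Int.fract_nonneg _))
      have h2 : (0:ℤ) ≤ ⌊(Nb : ℝ) * Int.fract ((n j2 : ℝ) * x)⌋ :=
        Int.floor_nonneg.mpr (mul_nonneg (by positivity) (Int.fract_nonneg _))
      omega
    have habs := Int.abs_sub_lt_one_of_floor_eq_floor hfl
    have hNbpos : (0:ℝ) < Nb := Nat.cast_pos.mpr hNb0
    have hfr : |Int.fract ((n j1 : ℝ) * x) - Int.fract ((n j2 : ℝ) * x)| ≤ 1 / Nb := by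
      rw [← mul_sub] at habs
      rw [abs_mul, abs_of_pos hNbpos] at habs
      rw [le_div_iff₀ hNbpos]
      linarith
    have hcast : ((n j2 - n j1 : ℕ) : ℝ) * x = (n j2 : ℝ) * x - (n j1 : ℝ) * x := by
      rw [Nat.cast_sub hnle]; ring
    rw [hcast]
    refine le_trans (nintDist_le_fract _ _) ?_
    rw [abs_sub_comm]
    refine hfr.trans (le_of_eq ?_)
    rw [hNb]
    push_cast
    rw [one_div, ← inv_pow]
    norm_num

def seqAux (F : ℕ → ℕ → ℕ) : ℕ → ℕ
  | 0 => F 0 0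
  | (k+1) => F (k+1) (seqAux F k)

theorem stmt16 (E S : Set ℝ) (hE : IsDirichlet E) (hS : S.Finite) :
    IsPseudoDirichlet (E ∪ S) := by
  obtain ⟨n, hmono, hn⟩ := hE
  have H : ∀ k B : ℕ, ∃ N : ℕ, B < N ∧ (∀ x ∈ E, nintDist (N * x) ≤ (1/2)^k) ∧
      (∀ x ∈ hS.toFinset, nintDist (N * x) ≤ (1/2)^k) :=
    fun k B => main_step E n hmono hn hS.toFinset k B
  choose F hF1 hF2 hF3 using H
  let m : ℕ → ℕ := seqAux F
  have hprop : ∀ k, (∀ x ∈ E, nintDist ((m k : ℝ) * x) ≤ (1/2)^k) ∧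
      (∀ x ∈ hS.toFinset, nintDist ((m k : ℝ) * x) ≤ (1/2)^k) := by
    intro k
    cases k with
    | zero => exact ⟨hF2 0 0, hF3 0 0⟩
    | succ k => exact ⟨hF2 (k+1) (m k), hF3 (k+1) (m k)⟩
  refine ⟨m, strictMono_nat_of_lt_succ fun k => hF1 (k+1) (m k), fun x hx => ?_⟩
  refine Filter.Eventually.of_forall fun k => ?_
  rcases hx with hx | hx
  · exact (hprop k).1 x hx
  · exact (hprop k).2 x (hS.mem_toFinset.mpr hx)
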